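/- Let ψ be a CNF formula with variables x1, …, xn and clauses c1, …, cm, and let A(ψ) be the Eppstein automaton of ψ. Alice has a winning strategy in the QSAT game on ψ if and only if Alice has a strategy in the synchronization game on A(ψ) that guarantees a singleton position is reached within n letters played in total. -/

import Mathlib

/-- Apply a word (list of letters) to a state of a DFA with transition function `δ`. -/
def applyWord {Q A : Type*} (δ : Q → A → Q) (q : Q) : List A → Q
  | [] => q
  | a :: w => applyWord δ (δ q a) w

/-- The history (list) of letters played after `n` moves of the synchronization game,
when Alice uses strategy `σA` and Bob uses strategy `σB`; Alice moves first, i.e.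
the letters at even indices are chosen by Alice and those at odd indices by Bob. -/
def playHist {A : Type*} (σA σB : List A → A) : ℕ → List A
  | 0 => []
  | n + 1 =>
      let h := playHist σA σB n
      h ++ [if n % 2 = 0 then σA h else σB h]

/-- `w` synchronizes the position `P` (a set of states holding coins) to a single state. -/
def IsResetFrom {Q A : Type*} [DecidableEq Q] (δ : Q → A → Q) (P : Finset Q)
    (w : List A) : Prop :=
  (P.image fun q => applyWord δ q w).card = 1

/-- Alice has a winning strategy in the synchronization game starting from position `P`. -/
def AliceWins {Q A : Type*} [DecidableEq Q] (δ : Q → A → Q) (P : Finset Q) : Prop :=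
  ∃ σA : List A → A, ∀ σB : List A → A, ∃ k : ℕ,
    IsResetFrom δ P (playHist σA σB k)

/-- Alice has a strategy in the synchronization game starting from position `P` that
guarantees reaching a singleton position in a play in which Alice has chosen at most
`m` letters (after `k` letters in total, Alice has chosen `(k + 1) / 2` of them). -/
def AliceWinsWithin {Q A : Type*} [DecidableEq Q] (δ : Q → A → Q) (P : Finset Q)
    (m : ℕ) : Prop :=
  ∃ σA : List A → A, ∀ σB : List A → A, ∃ k : ℕ,
    IsResetFrom δ P (playHist σA σB k) ∧ (k + 1) / 2 ≤ m

/-- Bob has a winning strategy in the synchronization game starting from position `P`: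
against every strategy of Alice the position never becomes a singleton. -/
def BobWins {Q A : Type*} [DecidableEq Q] (δ : Q → A → Q) (P : Finset Q) : Prop :=
  ∃ σB : List A → A, ∀ σA : List A → A, ∀ k : ℕ,
    ¬ IsResetFrom δ P (playHist σA σB k)

/-- The Eppstein automaton `A(ψ)` of a CNF formula `ψ` with `n` variables and `m` clauses.
The clause `c_i` contains the literal `x_j` iff `pos i j = true` and the literal `¬x_j`
iff `neg i j = true`. States: `Sum.inl (i, j)` is the state `q_{i,j+1}` (so `j : Fin (n+1)`
ranges over the `0`-based versions of the indices `1, …, n+1`) and `Sum.inr ()` is the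
state `z`. The alphabet is `Bool`, with `true` for the letter `a` and `false` for `b`. -/
def eppstein {n m : ℕ} (pos neg : Fin m → Fin n → Bool) :
    (Fin m × Fin (n + 1)) ⊕ Unit → Bool → (Fin m × Fin (n + 1)) ⊕ Unit
  | Sum.inr _, _ => Sum.inr ()
  | Sum.inl (i, j), c =>
      if h : (j : ℕ) < n then
        if (if c then pos i ⟨j, h⟩ else neg i ⟨j, h⟩) = true then Sum.inr ()
        else Sum.inl (i, ⟨(j : ℕ) + 1, by omega⟩)
      else Sum.inr ()

namespace QsatAux

/-- Totalized literal lookup. -/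
def posN {n m : ℕ} (p : Fin m → Fin n → Bool) (i : Fin m) (t : ℕ) : Bool :=
  if h : t < n then p i ⟨t, h⟩ else false

/-- The letter at position `t` of the word `w` matches the literal of clause `i`
at variable `v`. -/
def lit {n m : ℕ} (pos neg : Fin m → Fin n → Bool) (w : List Bool) (i : Fin m)
    (t v : ℕ) : Bool :=
  if w.getD t false then posN pos i v else posN neg i v

variable {n m : ℕ} (pos neg : Fin m → Fin n → Bool)

lemma apply_inr (w : List Bool) :
    applyWord (eppstein pos neg) (Sum.inr ()) w = Sum.inr () := by
  induction w with
  | nil => rfl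
  | cons a w ih => simpa [applyWord, eppstein] using ih

lemma posN_eq_true {p : Fin m → Fin n → Bool} {i : Fin m} {t : ℕ}
    (h : posN p i t = true) : ∃ ht : t < n, p i ⟨t, ht⟩ = true := by
  by_cases ht : t < n
  · exact ⟨ht, by simpa [posN, ht] using h⟩
  · simp [posN, ht] at h

lemma survive : ∀ (w : List Bool) (i : Fin m) (j : ℕ) (hj : j + w.length ≤ n),
    (∀ t < w.length, lit pos neg w i t (j + t) = false) →
    applyWord (eppstein pos neg) (Sum.inl (i, ⟨j, by omega⟩)) w
      = Sum.inl (i, ⟨j + w.length, by omega⟩) := by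
  intro w
  induction w with
  | nil => intro i j hj _; simp [applyWord]
  | cons a w ih =>
    intro i j hj hnm
    have hjn : j < n := by simp only [List.length_cons] at hj; omega
    have h0 := hnm 0 (by simp)
    simp only [lit, List.getD_cons_zero, Nat.add_zero, posN, hjn, dif_pos] at h0
    have hstep : eppstein pos neg (Sum.inl (i, ⟨j, by omega⟩)) a
        = Sum.inl (i, ⟨j + 1, by omega⟩) := by
      simp [eppstein, hjn, h0]
    rw [applyWord, hstep]
    have := ih i (j + 1) (by simp only [List.length_cons] at hj; omega)
      (fun t ht => by
        have := hnm (t + 1) (by simpa using Nat.succ_lt_succ ht)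
        simpa [lit, Nat.add_assoc, Nat.add_comm 1 t] using this)
    rw [this]
    simp only [List.length_cons, Sum.inl.injEq, Prod.mk.injEq, Fin.mk.injEq]
    exact ⟨trivial, by omega⟩

lemma die_len : ∀ (w : List Bool) (i : Fin m) (j : ℕ) (hj : j ≤ n),
    n < j + w.length →
    applyWord (eppstein pos neg) (Sum.inl (i, ⟨j, by omega⟩)) w = Sum.inr () := by
  intro w
  induction w with
  | nil => intro i j hj hlen; simp at hlen; omega
  | cons a w ih =>
    intro i j hj hlen
    by_cases hjn : j < n
    · rw [applyWord]
      by_cases hb : (if a then pos i ⟨j, hjn⟩ else neg i ⟨j, hjn⟩) = true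
      · have hstep : eppstein pos neg (Sum.inl (i, ⟨j, by omega⟩)) a = Sum.inr () := by
          simp [eppstein, hjn, hb]
        rw [hstep, apply_inr]
      · have hstep : eppstein pos neg (Sum.inl (i, ⟨j, by omega⟩)) a
            = Sum.inl (i, ⟨j + 1, by omega⟩) := by
          simp [eppstein, hjn, hb]
        rw [hstep]
        exact ih i (j + 1) (by omega) (by simp only [List.length_cons] at hlen; omega)
    · rw [applyWord]
      have hstep : eppstein pos neg (Sum.inl (i, ⟨j, by omega⟩)) a = Sum.inr () := by
        simp [eppstein, hjn]
      rw [hstep, apply_inr]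

lemma die_match : ∀ (w : List Bool) (i : Fin m) (j : ℕ) (hj : j ≤ n),
    (∃ t < w.length, lit pos neg w i t (j + t) = true) →
    applyWord (eppstein pos neg) (Sum.inl (i, ⟨j, by omega⟩)) w = Sum.inr () := by
  intro w
  induction w with
  | nil => rintro i j hj ⟨t, ht, _⟩; simp at ht
  | cons a w ih =>
    rintro i j hj ⟨t, ht, hl⟩
    by_cases hjn : j < n
    · rw [applyWord]
      by_cases hb : (if a then pos i ⟨j, hjn⟩ else neg i ⟨j, hjn⟩) = true
      · have hstep : eppstein pos neg (Sum.inl (i, ⟨j, by omega⟩)) a = Sum.inr () := by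
          simp [eppstein, hjn, hb]
        rw [hstep, apply_inr]
      · have hstep : eppstein pos neg (Sum.inl (i, ⟨j, by omega⟩)) a
            = Sum.inl (i, ⟨j + 1, by omega⟩) := by
          simp [eppstein, hjn, hb]
        rw [hstep]
        apply ih i (j + 1) (by omega)
        match t, ht, hl with
        | 0, ht, hl =>
          exfalso
          simp only [lit, List.getD_cons_zero, Nat.add_zero, posN, hjn, dif_pos] at hl
          exact hb (by rcases a <;> simpa using hl)
        | t + 1, ht, hl =>
          refine ⟨t, by simpa using Nat.lt_of_succ_lt_succ (by simpa using ht), ?_⟩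
          simpa [lit, Nat.add_assoc, Nat.add_comm 1 t] using hl
    · rw [applyWord]
      have hstep : eppstein pos neg (Sum.inl (i, ⟨j, by omega⟩)) a = Sum.inr () := by
        simp [eppstein, hjn]
      rw [hstep, apply_inr]

lemma reset_iff (w : List Bool) :
    IsResetFrom (eppstein pos neg) Finset.univ w ↔
      ∀ (i : Fin m) (j : Fin (n + 1)),
        applyWord (eppstein pos neg) (Sum.inl (i, j)) w = Sum.inr () := by
  constructor
  · intro h i j
    obtain ⟨x, hx⟩ := Finset.card_eq_one.mp h
    have h1 : applyWord (eppstein pos neg) (Sum.inr ()) w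
        ∈ Finset.univ.image (fun q => applyWord (eppstein pos neg) q w) :=
      Finset.mem_image_of_mem _ (Finset.mem_univ _)
    have h2 : applyWord (eppstein pos neg) (Sum.inl (i, j)) w
        ∈ Finset.univ.image (fun q => applyWord (eppstein pos neg) q w) :=
      Finset.mem_image_of_mem _ (Finset.mem_univ _)
    rw [hx, Finset.mem_singleton] at h1 h2
    rw [h2, ← h1, apply_inr]
  · intro h
    have him : Finset.univ.image (fun q => applyWord (eppstein pos neg) q w)
        = {Sum.inr ()} := by
      apply Finset.Subset.antisymm
      · intro x hx
        simp only [Finset.mem_image, Finset.mem_univ, true_and] at hx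
        obtain ⟨q, hq⟩ := hx
        match q with
        | Sum.inl (i, j) => simp [← hq, h i j]
        | Sum.inr () => simp [← hq, apply_inr]
      · intro x hx
        simp only [Finset.mem_singleton] at hx
        subst hx
        have := Finset.mem_image_of_mem (fun q => applyWord (eppstein pos neg) q w)
          (Finset.mem_univ (Sum.inr () : (Fin m × Fin (n + 1)) ⊕ Unit))
        simp only [apply_inr pos neg w] at this
        exact this
    rw [IsResetFrom, him, Finset.card_singleton]

end QsatAux

lemma playHist_length {A : Type*} (σA σB : List A → A) :
    ∀ k, (playHist σA σB k).length = k := by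
  intro k
  induction k with
  | zero => rfl
  | succ k ih => simp [playHist, ih]

lemma playHist_prefix {A : Type*} (σA σB : List A → A) :
    ∀ {k K : ℕ}, k ≤ K → ∃ s, playHist σA σB K = playHist σA σB k ++ s := by
  intro k K
  induction K with
  | zero => intro h; exact ⟨[], by simp [Nat.le_zero.mp h]⟩
  | succ K ih =>
    intro h
    rcases Nat.lt_or_ge k (K + 1) with h' | h'
    · obtain ⟨s, hs⟩ := ih (Nat.lt_succ_iff.mp h')
      exact ⟨s ++ [if K % 2 = 0 then σA (playHist σA σB K) else σB (playHist σA σB K)],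
        by simp [playHist, hs]⟩
    · exact ⟨[], by simp [Nat.le_antisymm h h']⟩

lemma playHist_getD {k K : ℕ} (σA σB : List Bool → Bool) (hkK : k ≤ K) {t : ℕ}
    (ht : t < k) :
    (playHist σA σB K).getD t false = (playHist σA σB k).getD t false := by
  obtain ⟨s, hs⟩ := playHist_prefix σA σB hkK
  rw [hs, List.getD_append]
  rw [playHist_length]; exact ht

/-- Alice has a winning strategy in the QSAT game on a CNF formula `ψ` (players alternately
assign truth values to `x_1, …, x_n`, Alice first, the assigned values being recorded in the
history of the play; Alice wins if the resulting assignment makes every clause of `ψ` true)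
if and only if Alice has a strategy in the synchronization game on the Eppstein automaton
`A(ψ)` that guarantees a singleton position is reached within `n` letters played in total.
Here `true` is both the truth value `1` and the letter `a`, and `false` is both `0` and `b`. -/

theorem qsat_game_iff_short_synchro_game (n m : ℕ) (pos neg : Fin m → Fin n → Bool) :
    (∃ σA : List Bool → Bool, ∀ σB : List Bool → Bool, ∀ i : Fin m, ∃ j : Fin n,
        (pos i j = true ∧ (playHist σA σB n).getD j false = true) ∨
        (neg i j = true ∧ (playHist σA σB n).getD j false = false)) ↔
      ∃ σA : List Bool → Bool, ∀ σB : List Bool → Bool, ∃ k ≤ n,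
        IsResetFrom (eppstein pos neg) Finset.univ (playHist σA σB k) := by
  constructor
  · rintro ⟨σA, hA⟩
    refine ⟨σA, fun σB => ⟨n, le_refl n, ?_⟩⟩
    rw [QsatAux.reset_iff]
    intro i j
    have hlen : (playHist σA σB n).length = n := playHist_length σA σB n
    rcases Nat.eq_zero_or_pos (j : ℕ) with hj0 | hjpos
    · obtain ⟨jv, hcase⟩ := hA σB i
      have hj : (⟨(j : ℕ), by omega⟩ : Fin (n + 1)) = j := rfl
      rw [← hj]
      apply QsatAux.die_match pos neg _ i (j : ℕ) (by omega)
      refine ⟨jv, by omega, ?_⟩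
      rw [hj0, Nat.zero_add]
      rcases hcase with ⟨hp, hg⟩ | ⟨hp, hg⟩
      · simp only [QsatAux.lit, hg]
        simp [QsatAux.posN, jv.isLt, hp]
      · simp only [QsatAux.lit, hg]
        simp [QsatAux.posN, jv.isLt, hp]
    · have hj : (⟨(j : ℕ), by omega⟩ : Fin (n + 1)) = j := rfl
      rw [← hj]
      exact QsatAux.die_len pos neg _ i (j : ℕ) (by omega) (by omega)
  · rintro ⟨σA, hA⟩
    refine ⟨σA, fun σB i => ?_⟩
    obtain ⟨k, hk, hreset⟩ := hA σB
    rw [QsatAux.reset_iff] at hreset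
    have h0 := hreset i ⟨0, by omega⟩
    set w := playHist σA σB k with hw
    have hlen : w.length = k := playHist_length σA σB k
    have hns : ¬ ∀ t < w.length, QsatAux.lit pos neg w i t (0 + t) = false := by
      intro hall
      rw [QsatAux.survive pos neg w i 0 (by omega) hall] at h0
      exact absurd h0 (by simp)
    push_neg at hns
    obtain ⟨t, ht, hlit⟩ := hns
    rw [Nat.zero_add] at hlit
    rw [show (QsatAux.lit pos neg w i t t ≠ false) ↔ (QsatAux.lit pos neg w i t t = true)
      from Bool.ne_false_iff] at hlit
    rcases hgd : w.getD t false with _ | _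
    · rw [QsatAux.lit, hgd, if_neg (by simp)] at hlit
      obtain ⟨htn, hp⟩ := QsatAux.posN_eq_true hlit
      refine ⟨⟨t, htn⟩, Or.inr ⟨hp, ?_⟩⟩
      simp only [Fin.val_mk]
      rw [playHist_getD σA σB hk (by omega), ← hw, hgd]
    · rw [QsatAux.lit, hgd, if_pos rfl] at hlit
      obtain ⟨htn, hp⟩ := QsatAux.posN_eq_true hlit
      refine ⟨⟨t, htn⟩, Or.inl ⟨hp, ?_⟩⟩
      simp only [Fin.val_mk]
      rw [playHist_getD σA σB hk (by omega), ← hw, hgd]
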